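/- Let Γ be a connected, locally finite graph equipped with a B-cobounded λ-quasi-action of a group G. Then there exists a constant C ≥ 1 (depending only on λ, B and Γ) such that: for every finite nonempty vertex set S ⊆ V(Γ) and every finite connected component Z of Γ with S deleted, every vertex z of Z satisfies dist_Γ(z, S) < C·diam_Γ(S) + C. -/

import Mathlib

open SimpleGraph

namespace Paper

variable {V W : Type*}

/-- Locally finite graph: every vertex has finite degree. -/
def LocFin (G : SimpleGraph V) : Prop := ∀ v : V, (G.neighborSet v).Finite

/-- All vertex degrees are at most `d`. -/
def DegLe (G : SimpleGraph V) (d : ℕ) : Prop :=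
  ∀ v : V, (G.neighborSet v).Finite ∧ (G.neighborSet v).ncard ≤ d

/-- Bounded valence. -/
def BddVal (G : SimpleGraph V) : Prop := ∃ d : ℕ, DegLe G d

/-- `(l, e)`-quasi-isometric embedding between the vertex sets of two graphs. -/
def IsQIE (G : SimpleGraph V) (H : SimpleGraph W) (l e : ℝ) (f : V → W) : Prop :=
  ∀ x y : V,
    (G.dist x y : ℝ) / l - e ≤ (H.dist (f x) (f y) : ℝ) ∧
      (H.dist (f x) (f y) : ℝ) ≤ l * (G.dist x y : ℝ) + e

/-- Coarse surjectivity: every vertex of the target lies within distance `e` of the image. -/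
def CoarseSurj (H : SimpleGraph W) (e : ℝ) (f : V → W) : Prop :=
  ∀ w : W, ∃ x : V, (H.dist w (f x) : ℝ) ≤ e

/-- `(l, e)`-quasi-isometry. -/
def IsQI (G : SimpleGraph V) (H : SimpleGraph W) (l e : ℝ) (f : V → W) : Prop :=
  IsQIE G H l e f ∧ CoarseSurj H e f

/-- `g` is an `h`-quasi-inverse of `f`. -/
def IsQInv (G : SimpleGraph V) (h : ℝ) (f : V → W) (g : W → V) : Prop :=
  ∀ x : V, (G.dist (g (f x)) x : ℝ) ≤ h

/-- Reachability by a walk all of whose vertices avoid the set `S`. -/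
def ReachOut (G : SimpleGraph V) (S : Set V) (a b : V) : Prop :=
  ∃ w : G.Walk a b, ∀ v ∈ w.support, v ∉ S

/-- A one-way infinite simple ray. -/
def RayIn (G : SimpleGraph V) (r : ℕ → V) : Prop :=
  Function.Injective r ∧ ∀ n : ℕ, G.Adj (r n) (r (n + 1))

/-- End-equivalence of rays: for every finite vertex set they have tails in the same
connected component of the graph with that set deleted. -/
def EndEquiv (G : SimpleGraph V) (r₁ r₂ : ℕ → V) : Prop :=
  ∀ S : Set V, S.Finite → ∃ N : ℕ, ∀ m n : ℕ, N ≤ m → N ≤ n → ReachOut G S (r₁ m) (r₂ n)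

/-- Two points (encoded as sequences: a constant sequence for a vertex, a ray for an end)
lie in distinct connected components of `G` with the vertex set `S` deleted. -/
def SepComps (G : SimpleGraph V) (S : Set V) (a b : ℕ → V) : Prop :=
  ∃ N : ℕ,
    (∀ m n : ℕ, N ≤ m → N ≤ n → ReachOut G S (a m) (a n)) ∧
    (∀ m n : ℕ, N ≤ m → N ≤ n → ReachOut G S (b m) (b n)) ∧
    (∀ m n : ℕ, N ≤ m → N ≤ n → ¬ ReachOut G S (a m) (b n))

/-- `vs(G) ≥ N`: any vertex set separating two ends has at least `N` elements. -/
def VsGe (G : SimpleGraph V) (N : ℕ) : Prop :=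
  ∀ r₁ r₂ : ℕ → V, RayIn G r₁ → RayIn G r₂ →
    ∀ S : Set V, S.Finite → SepComps G S r₁ r₂ → N ≤ S.ncard

/-- `vs(G) ≥ c` for a real threshold `c`. -/
def VsGeR (G : SimpleGraph V) (c : ℝ) : Prop :=
  ∀ r₁ r₂ : ℕ → V, RayIn G r₁ → RayIn G r₂ →
    ∀ S : Set V, S.Finite → SepComps G S r₁ r₂ → c ≤ (S.ncard : ℝ)

/-- `U` is a connected component of `G` with the vertex set `A` deleted. -/
def IsCompOut (G : SimpleGraph V) (A U : Set V) : Prop :=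
  ∃ a ∈ U, ∀ b : V, ReachOut G A a b ↔ b ∈ U

/-- The edge coboundary `δb` of a vertex set `b`. -/
def cob (G : SimpleGraph V) (b : Set V) : Set (Sym2 V) :=
  {e | ∃ x y : V, e = s(x, y) ∧ G.Adj x y ∧ x ∈ b ∧ y ∉ b}

/-- Membership in the Boolean ring `𝓑G` of vertex sets with finite coboundary. -/
def MemBX (G : SimpleGraph V) (b : Set V) : Prop := (cob G b).Finite

/-- The set of endpoints of the edges of `δb`. -/
def cobVerts (G : SimpleGraph V) (b : Set V) : Set V :=
  {v | ∃ w : V, s(v, w) ∈ cob G b}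

/-- A tight element: both sides induce connected subgraphs. -/
def Tight (G : SimpleGraph V) (b : Set V) : Prop :=
  (G.induce b).Connected ∧ (G.induce bᶜ).Connected

/-- Vertices of `A` that are endpoints of an edge with the other endpoint in `U`. -/
def AttachSet (G : SimpleGraph V) (A U : Set V) : Set V :=
  {v | v ∈ A ∧ ∃ u ∈ U, G.Adj v u}

/-- `incut(A) ≤ k` for a vertex set `A`, with the intrinsic metric of `G.induce A`. -/
def IncutBddSet (G : SimpleGraph V) (A : Set V) (k : ℕ) : Prop :=
  ∀ U : Set V, IsCompOut G A U →
    ∀ v w : A, (v : V) ∈ AttachSet G A U → (w : V) ∈ AttachSet G A U →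
      (G.induce A).dist v w ≤ k

/-- `outcut(A) ≤ k` for a vertex set `A`. -/
def OutcutBddSet (G : SimpleGraph V) (A : Set V) (k : ℕ) : Prop :=
  ∀ U : Set V, IsCompOut G A U → IncutBddSet G U k

/-- Uniform coboundary for a vertex set. -/
def UnifCobSet (G : SimpleGraph V) (A : Set V) : Prop :=
  (∃ k : ℕ, IncutBddSet G A k) ∧ (∃ k : ℕ, OutcutBddSet G A k)

/-- `incut(L) ≤ k` for a subgraph `L`, with its own intrinsic metric. -/
def IncutBddSub (G : SimpleGraph V) (L : G.Subgraph) (k : ℕ) : Prop :=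
  ∀ U : Set V, IsCompOut G L.verts U →
    ∀ v w : L.verts, (v : V) ∈ AttachSet G L.verts U → (w : V) ∈ AttachSet G L.verts U →
      L.coe.dist v w ≤ k

/-- `outcut(L) ≤ k` for a subgraph `L`. -/
def OutcutBddSub (G : SimpleGraph V) (L : G.Subgraph) (k : ℕ) : Prop :=
  ∀ U : Set V, IsCompOut G L.verts U → IncutBddSet G U k

/-- Uniform coboundary for a subgraph. -/
def UnifCobSub (G : SimpleGraph V) (L : G.Subgraph) : Prop :=
  (∃ k : ℕ, IncutBddSub G L k) ∧ (∃ k : ℕ, OutcutBddSub G L k)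

/-- Quasi-transitive graph: the automorphism group has finitely many orbits of vertices. -/
def QuasiTransitive (G : SimpleGraph V) : Prop :=
  ∃ F : Set V, F.Finite ∧ ∀ v : V, ∃ e : G ≃g G, ∃ w ∈ F, e w = v

/-- Hausdorff distance between two vertex sets is at most `r`. -/
def HausBdd (G : SimpleGraph V) (A B : Set V) (r : ℝ) : Prop :=
  (∀ a ∈ A, ∃ b ∈ B, (G.dist a b : ℝ) ≤ r) ∧ (∀ b ∈ B, ∃ a ∈ A, (G.dist a b : ℝ) ≤ r)

/-- Reachability by a walk avoiding the edge set `F`. -/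
def ReachAvoidE (G : SimpleGraph V) (F : Set (Sym2 V)) (a b : V) : Prop :=
  ∃ w : G.Walk a b, ∀ e ∈ w.edges, e ∉ F

/-- The ends of the rays `r₁`, `r₂` are separated by deleting the edge set `F`. -/
def SepEnds (G : SimpleGraph V) (F : Set (Sym2 V)) (r₁ r₂ : ℕ → V) : Prop :=
  ∃ N : ℕ, ∀ m n : ℕ, N ≤ m → N ≤ n → ¬ ReachAvoidE G F (r₁ m) (r₂ n)

/-- Accessibility: some `k ≥ 1` such that any two distinct ends can be separated by
deleting at most `k` edges. -/
def Accessible (G : SimpleGraph V) : Prop :=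
  ∃ k : ℕ, 1 ≤ k ∧ ∀ r₁ r₂ : ℕ → V, RayIn G r₁ → RayIn G r₂ → ¬ EndEquiv G r₁ r₂ →
    ∃ F : Set (Sym2 V), F.Finite ∧ F.ncard ≤ k ∧ SepEnds G F r₁ r₂

/-- `l`-quasi-action of a group on the vertex set of a graph. -/
def IsQAct {G₀ : Type*} [Group G₀] (G : SimpleGraph V) (l : ℝ) (φ : G₀ → V → V) : Prop :=
  (∀ g : G₀, IsQI G G l l (φ g)) ∧
  (∀ (g h : G₀) (x : V), (G.dist (φ (g * h) x) (φ g (φ h x)) : ℝ) ≤ l) ∧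
  (∀ g : G₀, IsQInv G l (φ g) (φ g⁻¹) ∧ IsQInv G l (φ g⁻¹) (φ g))

/-- `B`-cobounded quasi-action. -/
def Cobdd {G₀ : Type*} [Group G₀] (G : SimpleGraph V) (B : ℝ) (φ : G₀ → V → V) : Prop :=
  ∀ x y : V, ∃ g : G₀, (G.dist x (φ g y) : ℝ) ≤ B

/-- The diameter (in `ℕ`) of a vertex set. -/
noncomputable def setDiam (G : SimpleGraph V) (S : Set V) : ℕ :=
  sSup {d : ℕ | ∃ x ∈ S, ∃ y ∈ S, G.dist x y = d}

/-- 2-connected: connected, at least three vertices, and deleting any single vertex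
leaves it connected. -/
def TwoConnected (G : SimpleGraph V) : Prop :=
  G.Connected ∧ (∃ a b c : V, a ≠ b ∧ a ≠ c ∧ b ≠ c) ∧
    ∀ v : V, (G.induce {w : V | w ≠ v}).Connected

/-- Tree decomposition. -/
def IsTreeDecomp {VT : Type*} (X : SimpleGraph V) (T : SimpleGraph VT) (B : VT → Set V) :
    Prop :=
  T.IsTree ∧ (∀ x : V, ∃ u : VT, x ∈ B u) ∧
    ∀ u v w : VT, (∃ p : T.Walk u w, p.IsPath ∧ v ∈ p.support) → B u ∩ B w ⊆ B v

/-- Bounded adhesion. -/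
def BddAdhesion {VT : Type*} (T : SimpleGraph VT) (B : VT → Set V) : Prop :=
  ∃ N : ℕ, ∀ u w : VT, T.Adj u w → (B u ∩ B w).Finite ∧ (B u ∩ B w).ncard ≤ N

/-- Connected parts. -/
def ConnParts {VT : Type*} (X : SimpleGraph V) (B : VT → Set V) : Prop :=
  ∀ u : VT, (X.induce (B u)).Connected

/-- Replacing each bag by its closed `r`-neighbourhood. -/
def ballBag {VT : Type*} (X : SimpleGraph V) (B : VT → Set V) (r : ℕ) : VT → Set V :=
  fun u => {x : V | ∃ y ∈ B u, X.dist x y ≤ r}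

/-- A point of `G` which is either a vertex lying outside `B(S;R)` (encoded as a constant
sequence) or an end (encoded as a ray representing it). -/
def PtSeq (G : SimpleGraph V) (S : Set V) (R : ℝ) (a : ℕ → V) : Prop :=
  (∃ v : V, a = Function.const ℕ v ∧ ∀ s ∈ S, R < (G.dist v s : ℝ)) ∨ RayIn G a

/-- A subring of `𝓑G`: contains `∅`, and is closed under intersection and
symmetric difference. -/
def IsSubring (G : SimpleGraph V) (R : Set (Set V)) : Prop :=
  (∀ b ∈ R, MemBX G b) ∧ ∅ ∈ R ∧
    (∀ a ∈ R, ∀ b ∈ R, a ∩ b ∈ R) ∧ (∀ a ∈ R, ∀ b ∈ R, symmDiff a b ∈ R)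

/-- The subring generated by a family. -/
def genSubring (G : SimpleGraph V) (E : Set (Set V)) : Set (Set V) :=
  ⋂₀ {R : Set (Set V) | IsSubring G R ∧ E ⊆ R}

/-- Two vertex sets are nested. -/
def Nested (a b : Set V) : Prop :=
  a ∩ b = ∅ ∨ a ∩ bᶜ = ∅ ∨ aᶜ ∩ b = ∅ ∨ aᶜ ∩ bᶜ = ∅

/-- A nested family: closed under complementation and pairwise nested. -/
def NestedFam (E : Set (Set V)) : Prop :=
  (∀ b ∈ E, bᶜ ∈ E) ∧ ∀ a ∈ E, ∀ b ∈ E, Nested a b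

/-- A `G₀`-invariant family of vertex sets. -/
def GInvFam (G₀ : Type*) [Group G₀] [MulAction G₀ V] (E : Set (Set V)) : Prop :=
  ∀ g : G₀, ∀ b ∈ E, (fun x => g • x) '' b ∈ E

/-- A `G₀`-finite family of vertex sets: it meets only finitely many orbits. -/
def GFinFam (G₀ : Type*) [Group G₀] [MulAction G₀ V] (E : Set (Set V)) : Prop :=
  ∃ F : Set (Set V), F.Finite ∧ F ⊆ E ∧
    ∀ b ∈ E, ∃ g : G₀, ∃ c ∈ F, (fun x => g • x) '' c = b

/-- `g` stabilises the subgraph `L` setwise. -/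
def StabSub {G₀ : Type*} [Group G₀] [MulAction G₀ V] (G : SimpleGraph V) (g : G₀)
    (L : G.Subgraph) : Prop :=
  (∀ v : V, v ∈ L.verts ↔ g • v ∈ L.verts) ∧
    (∀ a b : V, L.Adj a b ↔ L.Adj (g • a) (g • b))

end Paper

section Stmt2Aux
open Paper SimpleGraph

variable {V : Type*} {Γ : SimpleGraph V}

lemma reachOut_symm {S : Set V} {a b : V} (h : ReachOut Γ S a b) : ReachOut Γ S b a := by
  obtain ⟨w, hw⟩ := h
  exact ⟨w.reverse, fun v hv => hw v (by simpa [Walk.support_reverse] using hv)⟩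

lemma reachOut_trans {S : Set V} {a b c : V} (h1 : ReachOut Γ S a b)
    (h2 : ReachOut Γ S b c) : ReachOut Γ S a c := by
  obtain ⟨w1, hw1⟩ := h1
  obtain ⟨w2, hw2⟩ := h2
  refine ⟨w1.append w2, fun v hv => ?_⟩
  rcases (Walk.mem_support_append_iff w1 w2).1 hv with h | h
  · exact hw1 v h
  · exact hw2 v h

lemma reachOut_start_not_mem {S : Set V} {a b : V} (h : ReachOut Γ S a b) : a ∉ S := by
  obtain ⟨w, hw⟩ := h
  exact hw a w.start_mem_support

lemma reachOut_end_not_mem {S : Set V} {a b : V} (h : ReachOut Γ S a b) : b ∉ S := by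
  obtain ⟨w, hw⟩ := h
  exact hw b w.end_mem_support

lemma reachOut_refl {S : Set V} {a : V} (h : a ∉ S) : ReachOut Γ S a a := by
  refine ⟨Walk.nil, fun v hv => ?_⟩
  simp only [Walk.support_nil, List.mem_singleton] at hv
  subst hv; exact h

lemma reachOut_cons {S : Set V} {a b c : V} (hadj : Γ.Adj a b) (ha : a ∉ S)
    (h : ReachOut Γ S b c) : ReachOut Γ S a c := by
  obtain ⟨w, hw⟩ := h
  refine ⟨Walk.cons hadj w, fun v hv => ?_⟩
  rw [Walk.support_cons] at hv
  rcases List.mem_cons.1 hv with rfl | h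
  · exact ha
  · exact hw v h

lemma reachOut_adj {S : Set V} {a b : V} (hadj : Γ.Adj a b) (ha : a ∉ S) (hb : b ∉ S) :
    ReachOut Γ S a b := reachOut_cons hadj ha (reachOut_refl hb)

lemma reach_of_dist_lt (hc : Γ.Connected) {S : Set V} {a b : V}
    (hfar : ∀ s ∈ S, Γ.dist a b < Γ.dist a s) : ReachOut Γ S a b := by
  classical
  obtain ⟨p, hp⟩ := hc.exists_walk_length_eq_dist a b
  refine ⟨p, fun v hv hvS => ?_⟩
  have h1 : Γ.dist a v ≤ p.length :=
    le_trans (dist_le (p.takeUntil v hv)) (Walk.length_takeUntil_le p hv)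
  have h2 := hfar v hvS
  omega

lemma dist_split {a b : V} (p : Γ.Walk a b) {t : V} (ht : t ∈ p.support) :
    Γ.dist a t + Γ.dist t b ≤ p.length := by
  classical
  have h1 : Γ.dist a t ≤ (p.takeUntil t ht).length := dist_le _
  have h2 : Γ.dist t b ≤ (p.dropUntil t ht).length := dist_le _
  have h3 : (p.takeUntil t ht).length + (p.dropUntil t ht).length = p.length := by
    rw [← Walk.length_append, p.take_spec ht]
  omega

lemma ball_finite (hc : Γ.Connected) (hlf : LocFin Γ) (v : V) :
    ∀ n : ℕ, {w : V | Γ.dist v w ≤ n}.Finite := by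
  intro n
  induction n with
  | zero =>
    refine Set.Finite.subset (Set.finite_singleton v) fun w hw => ?_
    simp only [Set.mem_setOf_eq, Nat.le_zero] at hw
    simp [(hc.dist_eq_zero_iff.1 hw).symm]
  | succ n ih =>
    have hsub : {w : V | Γ.dist v w ≤ n + 1} ⊆
        {w : V | Γ.dist v w ≤ n} ∪ ⋃ x ∈ {w : V | Γ.dist v w ≤ n}, Γ.neighborSet x := by
      intro w hw
      simp only [Set.mem_setOf_eq] at hw
      by_cases h : Γ.dist v w ≤ n
      · exact Or.inl h
      · right
        have hd : Γ.dist w v = n + 1 := by rw [dist_comm]; omega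
        obtain ⟨p, hp⟩ := hc.exists_walk_length_eq_dist w v
        rw [hd] at hp
        cases p with
        | nil => simp at hp
        | @cons _ x _ hadj q =>
          have hq : Γ.dist v x ≤ n := by
            rw [dist_comm]
            have := dist_le q
            simp only [Walk.length_cons] at hp
            omega
          exact Set.mem_biUnion hq hadj.symm
    exact Set.Finite.subset (ih.union (ih.biUnion fun x _ => hlf x)) hsub

lemma transfer (hc : Γ.Connected) {l : ℝ} (hl : 1 ≤ l) {f fi : V → V}
    (hfQ : IsQIE Γ Γ l l f) (hfiQ : IsQIE Γ Γ l l fi)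
    (hinv : ∀ x : V, (Γ.dist (f (fi x)) x : ℝ) ≤ l)
    {S T : Set V}
    (hT : ∀ p : V, p ∉ T → ∀ s ∈ S, ¬ ((Γ.dist p (f s) : ℝ) ≤ 2 * l ^ 2 + 2 * l)) :
    ∀ {x y : V} (w : Γ.Walk x y), (∀ v ∈ w.support, v ∉ T) →
      ReachOut Γ S (fi x) (fi y) := by
  intro x y w
  induction w with
  | nil =>
    rename_i u
    intro hsup
    refine reachOut_refl fun hfS => ?_
    have hx : u ∉ T := hsup _ (Walk.start_mem_support _)
    refine hT u hx _ hfS ?_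
    have h1 := hinv u
    have h2 : (Γ.dist u (f (fi u)) : ℝ) = (Γ.dist (f (fi u)) u : ℝ) := by rw [dist_comm]
    nlinarith
  | cons hadj w' ih =>
    rename_i u b y'
    intro hsup
    have hb : ∀ v ∈ w'.support, v ∉ T := fun v hv =>
      hsup v (by rw [Walk.support_cons]; exact List.mem_cons_of_mem _ hv)
    have huT : u ∉ T := hsup u (by rw [Walk.support_cons]; exact List.mem_cons_self)
    refine reachOut_trans ?_ (ih hb)
    apply reach_of_dist_lt hc
    intro s hs
    by_contra hle
    push_neg at hle
    have hl0 : (0:ℝ) < l := by linarith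
    have h1 : (Γ.dist u b : ℝ) ≤ 1 := by
      have : Γ.dist u b ≤ 1 := by
        have := dist_le (Walk.cons hadj Walk.nil)
        simpa using this
      exact_mod_cast this
    have h2 : (Γ.dist (fi u) (fi b) : ℝ) ≤ 2 * l := by
      have := (hfiQ u b).2
      nlinarith
    have h3 : (Γ.dist (fi u) s : ℝ) ≤ 2 * l := le_trans (by exact_mod_cast hle) h2
    have h4 : (Γ.dist (f (fi u)) (f s) : ℝ) ≤ l * (Γ.dist (fi u) s : ℝ) + l := (hfQ _ _).2
    have t1 : Γ.dist u (f s) ≤ Γ.dist u (f (fi u)) + Γ.dist (f (fi u)) (f s) :=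
      hc.dist_triangle
    have t1' : (Γ.dist u (f s) : ℝ) ≤
        (Γ.dist u (f (fi u)) : ℝ) + (Γ.dist (f (fi u)) (f s) : ℝ) := by exact_mod_cast t1
    have t2 : (Γ.dist u (f (fi u)) : ℝ) ≤ l := by rw [SimpleGraph.dist_comm]; exact_mod_cast hinv u
    refine hT u huT s hs ?_
    nlinarith

end Stmt2Aux

set_option maxHeartbeats 2000000

open Paper in
theorem stmt2 {V G₀ : Type*} [Group G₀] (Γ : SimpleGraph V)
    (hc : Γ.Connected) (hlf : LocFin Γ)
    (l B : ℝ) (hl : 1 ≤ l) (hB : 0 ≤ B)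
    (φ : G₀ → V → V) (hqa : IsQAct Γ l φ) (hcb : Cobdd Γ B φ) :
    ∃ C : ℝ, 1 ≤ C ∧
      ∀ S : Set V, S.Finite → S.Nonempty →
        ∀ Z : Set V, Z.Finite → IsCompOut Γ S Z →
          ∀ z ∈ Z, ∃ s ∈ S, (Γ.dist z s : ℝ) < C * (setDiam Γ S : ℝ) + C := by
  classical
  have hl0 : (0:ℝ) < l := by linarith
  by_cases hV : Finite V
  · -- finite graph: take C larger than the diameter of the whole graph
    have : Fintype V := Fintype.ofFinite V
    set M : ℕ := Finset.sup Finset.univ (fun p : V × V => Γ.dist p.1 p.2) with hM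
    have hM0 : (0:ℝ) ≤ (M:ℝ) := Nat.cast_nonneg _
    refine ⟨(M : ℝ) + 1, by linarith, ?_⟩
    intro S hS hSne Z hZ hcomp z hz
    obtain ⟨s, hs⟩ := hSne
    refine ⟨s, hs, ?_⟩
    have h1 : Γ.dist z s ≤ M :=
      Finset.le_sup (f := fun p : V × V => Γ.dist p.1 p.2) (Finset.mem_univ (z, s))
    have h1' : (Γ.dist z s : ℝ) ≤ (M:ℝ) := by exact_mod_cast h1
    have h2 : (0:ℝ) ≤ (setDiam Γ S : ℝ) := Nat.cast_nonneg _
    nlinarith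
  · -- infinite graph
    have hVinf : Infinite V := not_finite_iff_infinite.mp hV
    set C : ℝ := l*l + 4*l^3 + 6*l^2 + l*B + (1+l) + (B + 2*l^2 + 3*l) + 1 with hCdef
    have hCl2 : l*l ≤ C := by nlinarith [pow_nonneg hl0.le 3, sq_nonneg l, mul_nonneg hl0.le hB]
    have hCk : 4*l^3 + 6*l^2 + l*B < C := by
      nlinarith [sq_nonneg l, mul_nonneg hl0.le hB]
    have hC1l : 1 + l ≤ C := by
      nlinarith [pow_nonneg hl0.le 3, sq_nonneg l, mul_nonneg hl0.le hB]
    have hCk2 : B + 2*l^2 + 3*l < C := by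
      nlinarith [pow_nonneg hl0.le 3, sq_nonneg l, mul_nonneg hl0.le hB]
    have hC1 : (1:ℝ) ≤ C := by linarith
    refine ⟨C, hC1, ?_⟩
    intro S hSfin hSne Z hZfin hcomp z hz
    obtain ⟨a, haZ, haIff⟩ := hcomp
    -- distance to S, and the maximal depth D of Z
    set FS := hSfin.toFinset with hFS
    have hFSne : FS.Nonempty := by rw [hFS]; exact hSfin.toFinset_nonempty.2 hSne
    set ds : V → ℕ := fun w => ((FS.image (Γ.dist w)).min' (hFSne.image _)) with hds
    have ds_exists : ∀ w : V, ∃ s ∈ S, Γ.dist w s = ds w := by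
      intro w
      have h := (FS.image (Γ.dist w)).min'_mem (hFSne.image _)
      rw [Finset.mem_image] at h
      obtain ⟨s, hsFS, hval⟩ := h
      exact ⟨s, hSfin.mem_toFinset.1 hsFS, hval⟩
    have ds_le : ∀ w : V, ∀ s ∈ S, ds w ≤ Γ.dist w s := fun w s hs =>
      Finset.min'_le _ _ (Finset.mem_image_of_mem _ (hSfin.mem_toFinset.2 hs))
    set FZ := hZfin.toFinset with hFZ
    have hzFZ : z ∈ FZ := hZfin.mem_toFinset.2 hz
    have hFZne : (FZ.image ds).Nonempty := ⟨ds z, Finset.mem_image_of_mem _ hzFZ⟩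
    set D : ℕ := (FZ.image ds).max' hFZne with hD
    obtain ⟨z', hz'Z, hz'D⟩ : ∃ z' ∈ Z, ds z' = D := by
      have h := (FZ.image ds).max'_mem hFZne
      rw [Finset.mem_image] at h
      obtain ⟨w, hw, hv⟩ := h
      exact ⟨w, hZfin.mem_toFinset.1 hw, hv⟩
    have hDle : ∀ w ∈ Z, ds w ≤ D := fun w hw =>
      Finset.le_max' _ _ (Finset.mem_image_of_mem _ (hZfin.mem_toFinset.2 hw))
    obtain ⟨s₁, hs₁S, hs₁d⟩ := ds_exists z
    refine ⟨s₁, hs₁S, ?_⟩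
    by_contra hcon
    push_neg at hcon
    set dR : ℝ := (setDiam Γ S : ℝ) with hdR
    have hd0 : (0:ℝ) ≤ dR := by rw [hdR]; exact Nat.cast_nonneg _
    have hzD' : Γ.dist z s₁ ≤ D := by rw [hs₁d]; exact hDle z hz
    have hDbig : C * dR + C ≤ (D:ℝ) := le_trans hcon (by exact_mod_cast hzD')
    -- diameter bound
    have hdiam : ∀ x ∈ S, ∀ y ∈ S, (Γ.dist x y : ℝ) ≤ dR := by
      intro x hx y hy
      have hfin : {k : ℕ | ∃ x ∈ S, ∃ y ∈ S, Γ.dist x y = k}.Finite := by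
        refine Set.Finite.subset ((hSfin.prod hSfin).image (fun p : V × V => Γ.dist p.1 p.2)) ?_
        rintro k ⟨x, hx, y, hy, rfl⟩
        exact ⟨(x, y), ⟨hx, hy⟩, rfl⟩
      have h : Γ.dist x y ≤ setDiam Γ S := by
        show Γ.dist x y ≤ sSup {k : ℕ | ∃ x ∈ S, ∃ y ∈ S, Γ.dist x y = k}
        exact le_csSup hfin.bddAbove ⟨x, hx, y, hy, rfl⟩
      rw [hdR]; exact_mod_cast h
    -- the quasi-isometry moving s₁ close to z'
    obtain ⟨g, hg⟩ := hcb z' s₁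
    set f : V → V := φ g with hf
    set fi : V → V := φ g⁻¹ with hfi
    have hfQ : IsQIE Γ Γ l l f := (hqa.1 g).1
    have hfiQ : IsQIE Γ Γ l l fi := (hqa.1 g⁻¹).1
    have hinv1 : ∀ x : V, (Γ.dist (fi (f x)) x : ℝ) ≤ l := (hqa.2.2 g).1
    have hinv2 : ∀ x : V, (Γ.dist (f (fi x)) x : ℝ) ≤ l := (hqa.2.2 g).2
    set ρ : ℝ := 2 * l ^ 2 + 2 * l with hρ
    have hρ0 : (0:ℝ) < ρ := by rw [hρ]; nlinarith
    set R₀ : ℝ := B + l * dR + l + ρ with hR₀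
    have hR₀0 : (0:ℝ) ≤ R₀ := by rw [hR₀, hρ]; nlinarith [mul_nonneg hl0.le hd0]
    -- numeric conditions
    have cond4 : l * (l + ρ + R₀) < (D:ℝ) := by
      have heq : l * (l + ρ + R₀) = l*l*dR + (4*l^3 + 6*l^2 + l*B) := by
        rw [hR₀, hρ]; ring
      have h1 : l*l*dR ≤ C*dR := mul_le_mul_of_nonneg_right hCl2 hd0
      linarith [hDbig, heq ▸ (by linarith : l*l*dR + (4*l^3 + 6*l^2 + l*B) < C*dR + C)]
    have cond5 : dR + R₀ < (D:ℝ) := by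
      have heq : dR + R₀ = (1+l)*dR + (B + 2*l^2 + 3*l) := by rw [hR₀, hρ]; ring
      have h1 : (1+l)*dR ≤ C*dR := mul_le_mul_of_nonneg_right hC1l hd0
      linarith [hDbig, heq ▸ (by linarith : (1+l)*dR + (B + 2*l^2 + 3*l) < C*dR + C)]
    have cond1 : R₀ < (D:ℝ) := by nlinarith [cond4]
    have cond2 : l < (D:ℝ) := by nlinarith [cond4]
    -- component membership helpers
    have memZ : ∀ w : V, w ∈ Z ↔ ReachOut Γ S a w := fun w => (haIff w).symm
    have hZnotS : ∀ w ∈ Z, w ∉ S := fun w hw => reachOut_end_not_mem ((memZ w).1 hw)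
    have hz'far : ∀ s ∈ S, (D:ℝ) ≤ (Γ.dist z' s : ℝ) := by
      intro s hs
      have h := ds_le z' s hs
      rw [hz'D] at h
      exact_mod_cast h
    have ballZ : ∀ w : V, (Γ.dist z' w : ℝ) < (D:ℝ) → w ∈ Z := by
      intro w hw
      have hwn : Γ.dist z' w < D := by exact_mod_cast hw
      have hreach : ReachOut Γ S z' w := by
        refine reach_of_dist_lt hc fun s hs => ?_
        have h := ds_le z' s hs
        rw [hz'D] at h
        omega
      exact (memZ w).2 (reachOut_trans ((memZ z').1 hz'Z) hreach)
    set T : Set V := {p : V | ∃ s ∈ S, (Γ.dist p (f s) : ℝ) ≤ ρ} with hT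
    have hTnear : ∀ p ∈ T, (Γ.dist z' p : ℝ) ≤ R₀ := by
      intro p hp
      rw [hT, Set.mem_setOf_eq] at hp
      obtain ⟨s₃, hs₃, hd3⟩ := hp
      have t1 : Γ.dist z' p ≤ Γ.dist z' (f s₁) + Γ.dist (f s₁) p := hc.dist_triangle
      have t2 : Γ.dist (f s₁) p ≤ Γ.dist (f s₁) (f s₃) + Γ.dist (f s₃) p := hc.dist_triangle
      have q1 : (Γ.dist (f s₁) (f s₃) : ℝ) ≤ l * dR + l := by
        have hq := (hfQ s₁ s₃).2
        have hd13 := hdiam s₁ hs₁S s₃ hs₃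
        nlinarith
      have q2 : (Γ.dist (f s₃) p : ℝ) ≤ ρ := by rw [dist_comm]; exact hd3
      have t1' : (Γ.dist z' p : ℝ) ≤
          (Γ.dist z' (f s₁) : ℝ) + (Γ.dist (f s₁) p : ℝ) := by exact_mod_cast t1
      have t2' : (Γ.dist (f s₁) p : ℝ) ≤
          (Γ.dist (f s₁) (f s₃) : ℝ) + (Γ.dist (f s₃) p : ℝ) := by exact_mod_cast t2
      rw [hR₀]
      linarith
    have hTZ : ∀ p ∈ T, p ∈ Z := fun p hp => ballZ p (lt_of_le_of_lt (hTnear p hp) cond1)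
    have hTnotS : ∀ p ∈ T, p ∉ S := fun p hp => hZnotS p (hTZ p hp)
    have htrans : ∀ {x y : V} (w : Γ.Walk x y), (∀ v ∈ w.support, v ∉ T) →
        ReachOut Γ S (fi x) (fi y) := by
      refine transfer hc hl hfQ hfiQ hinv2 ?_
      intro p hp s hs hle
      exact hp (by rw [hT, Set.mem_setOf_eq]; exact ⟨s, hs, by rw [hρ]; exact hle⟩)
    set ζ : V := f z' with hζ
    have hζfar : ∀ s ∈ S, ρ + R₀ < (Γ.dist ζ (f s) : ℝ) := by
      intro s hs
      have h1 := (hfQ z' s).1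
      have h2 : (l + ρ + R₀) * l < (Γ.dist z' s : ℝ) :=
        lt_of_lt_of_le (by nlinarith [cond4]) (hz'far s hs)
      have h3 : l + ρ + R₀ < (Γ.dist z' s : ℝ) / l := (lt_div_iff₀ hl0).2 h2
      linarith
    have hζT : ζ ∉ T := by
      intro hmem
      rw [hT, Set.mem_setOf_eq] at hmem
      obtain ⟨s, hs, hle⟩ := hmem
      have := hζfar s hs
      linarith
    have hfiζZ : fi ζ ∈ Z := by
      apply ballZ
      have h1 := hinv1 z'
      have h2 : (Γ.dist z' (fi ζ) : ℝ) = (Γ.dist (fi (f z')) z' : ℝ) := by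
        rw [hζ, SimpleGraph.dist_comm]
      rw [h2]
      linarith [cond2]
    -- Claim A: everything T-reachable from ζ lies near f '' Z
    have claimA : ∀ y : V, ReachOut Γ T ζ y →
        fi y ∈ Z ∧ (Γ.dist y (f (fi y)) : ℝ) ≤ l := by
      intro y hro
      obtain ⟨w, hw⟩ := hro
      have h1 : ReachOut Γ S (fi ζ) (fi y) := htrans w hw
      have h2 : fi y ∈ Z := (memZ _).2 (reachOut_trans ((memZ _).1 hfiζZ) h1)
      refine ⟨h2, ?_⟩
      rw [SimpleGraph.dist_comm]
      exact hinv2 y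
    have bigFin : {y : V | ∃ x ∈ Z, (Γ.dist y (f x) : ℝ) ≤ l}.Finite := by
      have hsub : {y : V | ∃ x ∈ Z, (Γ.dist y (f x) : ℝ) ≤ l} ⊆
          ⋃ x ∈ Z, {y : V | Γ.dist (f x) y ≤ ⌊l⌋₊} := by
        rintro y ⟨x, hx, hd⟩
        refine Set.mem_biUnion hx ?_
        simp only [Set.mem_setOf_eq]
        rw [SimpleGraph.dist_comm]
        exact Nat.le_floor (by exact_mod_cast hd)
      exact (hZfin.biUnion fun x _ => ball_finite hc hlf (f x) ⌊l⌋₊).subset hsub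
    -- Claim B: no element of S is T-reachable from ζ
    have claimB : ∀ s'' ∈ S, ¬ ReachOut Γ T ζ s'' := by
      intro s'' hs'' hro
      have SS : ∀ s₂ ∈ S, ∀ s₃ ∈ S, ReachOut Γ T s₂ s₃ := by
        intro s₂ h2 s₃ h3
        obtain ⟨p, hp⟩ := hc.exists_walk_length_eq_dist s₂ s₃
        refine ⟨p, fun v hv hvT => ?_⟩
        have hd1 : Γ.dist s₂ v ≤ p.length :=
          le_trans (dist_le (p.takeUntil v hv)) (Walk.length_takeUntil_le p hv)
        have t1 : Γ.dist z' s₂ ≤ Γ.dist z' v + Γ.dist v s₂ := hc.dist_triangle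
        have c1 : (Γ.dist z' v : ℝ) ≤ R₀ := hTnear v hvT
        have c2 : (D:ℝ) ≤ (Γ.dist z' s₂ : ℝ) := hz'far s₂ h2
        have c3 : (Γ.dist v s₂ : ℝ) ≤ dR := by
          rw [SimpleGraph.dist_comm]
          have hle : (Γ.dist s₂ v : ℝ) ≤ (Γ.dist s₂ s₃ : ℝ) := by
            rw [← hp] at *
            exact_mod_cast hd1
          exact le_trans hle (hdiam s₂ h2 s₃ h3)
        have t1' : (Γ.dist z' s₂ : ℝ) ≤ (Γ.dist z' v : ℝ) + (Γ.dist v s₂ : ℝ) := by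
          exact_mod_cast t1
        linarith [cond5]
      have firstS : ∀ (u y : V) (w : Γ.Walk u y), y ∈ S → u ∉ Z → u ∉ S →
          ∃ s₂ ∈ S, ReachOut Γ T u s₂ := by
        intro u y w
        induction w with
        | nil =>
          intro hyS huZ huS
          exact absurd hyS huS
        | @cons u b y' hadj w' ih =>
          intro hyS huZ huS
          have huT : u ∉ T := fun h => huZ (hTZ u h)
          by_cases hbS : b ∈ S
          · exact ⟨b, hbS, reachOut_adj hadj huT (fun h => hTnotS b h hbS)⟩
          · have hbZ : b ∉ Z := by
              intro hbZ
              exact huZ ((memZ u).2 (reachOut_trans ((memZ b).1 hbZ)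
                (reachOut_adj hadj.symm hbS huS)))
            obtain ⟨s₂, hs₂, hro₂⟩ := ih hyS hbZ hbS
            exact ⟨s₂, hs₂, reachOut_cons hadj huT hro₂⟩
      have houtside : ∀ u : V, u ∉ Z → u ∉ S →
          u ∈ {y : V | ∃ x ∈ Z, (Γ.dist y (f x) : ℝ) ≤ l} := by
        intro u huZ huS
        obtain ⟨w0⟩ := hc.preconnected u s''
        obtain ⟨s₂, hs₂, hro₂⟩ := firstS u s'' w0 hs'' huZ huS
        have hζu : ReachOut Γ T ζ u :=
          reachOut_trans hro (reachOut_trans (SS s'' hs'' s₂ hs₂) (reachOut_symm hro₂))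
        obtain ⟨h1, h2⟩ := claimA u hζu
        exact ⟨fi u, h1, h2⟩
      have hcompl : ((Z ∪ S)ᶜ : Set V).Infinite :=
        Set.Finite.infinite_compl (hZfin.union hSfin)
      refine hcompl (bigFin.subset ?_)
      intro u hu
      simp only [Set.mem_compl_iff, Set.mem_union, not_or] at hu
      exact houtside u hu.1 hu.2
    -- final contradiction: a geodesic from ζ to its nearest point of S crosses T
    obtain ⟨s'', hs''S, hs''d⟩ := ds_exists ζ
    obtain ⟨p0, hp0⟩ := hc.exists_walk_length_eq_dist ζ s''
    set p : Γ.Walk ζ s'' := p0.bypass with hpb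
    have hpPath : p.IsPath := p0.bypass_isPath
    have hplen : p.length = Γ.dist ζ s'' :=
      le_antisymm (hp0 ▸ Walk.length_bypass_le p0) (dist_le p)
    have hSonp : ∀ v ∈ p.support, v ∈ S → v = s'' := by
      intro v hv hvS
      by_contra hne
      have h1 : Γ.dist ζ v ≤ (p.takeUntil v hv).length := dist_le _
      have h2 : (p.takeUntil v hv).length + (p.dropUntil v hv).length = p.length := by
        rw [← Walk.length_append, p.take_spec hv]
      have h3 : (p.dropUntil v hv).length ≠ 0 :=
        fun h0 => hne (Walk.eq_of_length_eq_zero h0)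
      have h4 := ds_le ζ v hvS
      rw [← hs''d] at h4
      omega
    have firstT : ∀ (x y : V) (w : Γ.Walk x y), w.support.Nodup →
        (∀ v ∈ w.support, v ∈ S → v = y) → x ∉ T → y ∉ T →
        ReachOut Γ T x y ∨ ∃ t ∈ T, t ∈ w.support ∧ ReachOut Γ S x t := by
      intro x y w
      induction w with
      | nil =>
        intro _ _ hxT _
        exact Or.inl (reachOut_refl hxT)
      | @cons u b y' hadj w' ih =>
        intro hnd hSv huT hyT
        have hndc : u ∉ w'.support ∧ w'.support.Nodup := by
          rw [Walk.support_cons] at hnd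
          exact List.nodup_cons.1 hnd
        have huS : u ∉ S := by
          intro huS
          have heq : u = y' := hSv u (Walk.start_mem_support _) huS
          exact hndc.1 (heq ▸ w'.end_mem_support)
        by_cases hbT : b ∈ T
        · refine Or.inr ⟨b, hbT, ?_, reachOut_adj hadj huS (fun h => hTnotS b hbT h)⟩
          rw [Walk.support_cons]
          exact List.mem_cons_of_mem _ w'.start_mem_support
        · have hSv' : ∀ v ∈ w'.support, v ∈ S → v = y' := fun v hv =>
            hSv v (by rw [Walk.support_cons]; exact List.mem_cons_of_mem _ hv)
          rcases ih hndc.2 hSv' hbT hyT with h | ⟨t, htT, htsup, hroS⟩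
          · exact Or.inl (reachOut_cons hadj huT h)
          · refine Or.inr ⟨t, htT, ?_, reachOut_cons hadj huS hroS⟩
            rw [Walk.support_cons]
            exact List.mem_cons_of_mem _ htsup
    have hs''T : s'' ∉ T := fun h => hTnotS s'' h hs''S
    rcases firstT ζ s'' p hpPath.support_nodup hSonp hζT hs''T with
      h | ⟨t, htT, htsup, hroS⟩
    · exact claimB s'' hs''S h
    · have hζZ : ζ ∈ Z :=
        (memZ ζ).2 (reachOut_trans ((memZ t).1 (hTZ t htT)) (reachOut_symm hroS))
      have htT' := htT
      rw [hT, Set.mem_setOf_eq] at htT'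
      obtain ⟨s₃, hs₃S, hs₃d⟩ := htT'
      have e1 : Γ.dist ζ t + Γ.dist t s'' ≤ p.length := dist_split p htsup
      have e2 : ρ + R₀ < (Γ.dist ζ (f s₃) : ℝ) := hζfar s₃ hs₃S
      have e3 : (Γ.dist ζ (f s₃) : ℝ) ≤ (Γ.dist ζ t : ℝ) + ρ := by
        have t1 : Γ.dist ζ (f s₃) ≤ Γ.dist ζ t + Γ.dist t (f s₃) := hc.dist_triangle
        have t1' : (Γ.dist ζ (f s₃) : ℝ) ≤ (Γ.dist ζ t : ℝ) + (Γ.dist t (f s₃) : ℝ) := by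
          exact_mod_cast t1
        linarith [hs₃d]
      have e4 : (D:ℝ) - R₀ ≤ (Γ.dist t s'' : ℝ) := by
        have t1 : Γ.dist z' s'' ≤ Γ.dist z' t + Γ.dist t s'' := hc.dist_triangle
        have t1' : (Γ.dist z' s'' : ℝ) ≤ (Γ.dist z' t : ℝ) + (Γ.dist t s'' : ℝ) := by
          exact_mod_cast t1
        linarith [hTnear t htT, hz'far s'' hs''S]
      have e5 : ds ζ ≤ D := hDle ζ hζZ
      have e6 : (Γ.dist ζ t : ℝ) + (Γ.dist t s'' : ℝ) ≤ (D:ℝ) := by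
        have h6 : Γ.dist ζ t + Γ.dist t s'' ≤ D := by
          rw [hplen, hs''d] at e1
          omega
        exact_mod_cast h6
      linarith [e2, e3, e4, e6]
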